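/- Let μ be an atomless Borel measure on ℝⁿ with μ(ℝⁿ) = ∞ and μ(𝔹) < ∞ for every open ball 𝔹 ⊆ ℝⁿ. Then there exists a constant D = D(n) > 1 such that for every positive integer j, there exists an open ball 𝔹 ⊆ ℝⁿ satisfying j ≤ μ(2𝔹) ≤ D μ(𝔹), where 2𝔹 is the concentric ball of twice the radius. -/

import Mathlib

open MeasureTheory Metric
open scoped ENNReal

/-- Rickman's Hunting Lemma. There is a constant `D = D(n) > 1` such that for
every atomless Borel measure `μ` on `ℝⁿ` with `μ(ℝⁿ) = ∞` which is finite on balls, and every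
positive integer `j`, there is an open ball `𝔹 = B(a,r)` with `j ≤ μ(2𝔹) ≤ D μ(𝔹)`. -/
theorem rickman_hunting_lemma (n : ℕ) :
    ∃ D : ℝ≥0∞, 1 < D ∧ D < ⊤ ∧
      ∀ μ : Measure (EuclideanSpace ℝ (Fin n)),
        (∀ x, μ {x} = 0) →
        μ Set.univ = ⊤ →
        (∀ (a : EuclideanSpace ℝ (Fin n)) (r : ℝ), μ (ball a r) < ⊤) →
        ∀ j : ℕ, 0 < j →
          ∃ (a : EuclideanSpace ℝ (Fin n)) (r : ℝ), 0 < r ∧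
            (j : ℝ≥0∞) ≤ μ (ball a (2 * r)) ∧
            μ (ball a (2 * r)) ≤ D * μ (ball a r) := by
  classical
  set E := EuclideanSpace ℝ (Fin n)
  -- A fixed finite covering of the model ball, giving the dimensional constant.
  obtain ⟨F, hFmem, hFcov⟩ :
      ∃ F : Finset E, (∀ p ∈ F, ‖p‖ ≤ 20) ∧
        closedBall (0 : E) 20 ⊆ ⋃ p ∈ F, ball p 2⁻¹ := by
    obtain ⟨t, ht1, ht2⟩ := (isCompact_closedBall (0 : E) 20).elim_nhds_subcover
      (fun x => ball x 2⁻¹) (fun x _ => ball_mem_nhds x (by norm_num))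
    refine ⟨t, fun p hp => ?_, ht2⟩
    simpa [mem_closedBall, dist_zero_right] using ht1 p hp
  set Cc : ℝ≥0∞ := (F.card : ℝ≥0∞) with hCc
  refine ⟨(Cc + 2) * (Cc + 2), ?_, ?_, ?_⟩
  · have h2 : (2 : ℝ≥0∞) ≤ Cc + 2 := le_add_self
    calc (1 : ℝ≥0∞) < 2 * 2 := by norm_num
    _ ≤ (Cc + 2) * (Cc + 2) := mul_le_mul' h2 h2
  · have hfin : Cc + 2 ≠ ⊤ := by simp [hCc]
    exact lt_top_iff_ne_top.mpr (ENNReal.mul_ne_top hfin hfin)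
  · intro μ hatom hμuniv hfin j hj
    have hj1 : (1 : ℝ≥0∞) ≤ (j : ℝ≥0∞) := by exact_mod_cast hj
    -- the scaled covering
    have hcov : ∀ (a : E) (r : ℝ), 0 < r →
        closedBall a (20 * r) ⊆ ⋃ p ∈ F, ball (a + r • p) (r / 2) := by
      intro a r hr x hx
      have hx' : r⁻¹ • (x - a) ∈ closedBall (0 : E) 20 := by
        rw [mem_closedBall_zero_iff, norm_smul, norm_inv, Real.norm_of_nonneg hr.le]
        have hxa : ‖x - a‖ ≤ 20 * r := by
          rw [← dist_eq_norm]; exact mem_closedBall.mp hx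
        rw [inv_mul_le_iff₀ hr]
        linarith
      have := hFcov hx'
      simp only [Set.mem_iUnion, exists_prop] at this
      obtain ⟨p, hpF, hxp⟩ := this
      have key : x - (a + r • p) = r • (r⁻¹ • (x - a) - p) := by
        rw [smul_sub, smul_inv_smul₀ hr.ne']
        abel
      refine Set.mem_biUnion hpF ?_
      rw [mem_ball, dist_eq_norm, key, norm_smul, Real.norm_of_nonneg hr.le]
      have hxp' : ‖r⁻¹ • (x - a) - p‖ < 2⁻¹ := by
        rw [← dist_eq_norm]; exact mem_ball.mp hxp
      have := mul_lt_mul_of_pos_left hxp' hr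
      linarith
    -- the critical radius function
    set ρ : E → ℝ := fun y => sInf {r : ℝ | (j : ℝ≥0∞) ≤ μ (ball y r)} with hρdef
    have hbdd : ∀ y : E, BddBelow {r : ℝ | (j : ℝ≥0∞) ≤ μ (ball y r)} := by
      intro y
      refine ⟨0, fun r hr => ?_⟩
      by_contra hneg
      push_neg at hneg
      have : ball y r = ∅ := ball_eq_empty.mpr hneg.le
      rw [Set.mem_setOf_eq, this, measure_empty] at hr
      have : (j : ℝ≥0∞) = 0 := le_antisymm hr zero_le
      exact hj.ne' (by exact_mod_cast this)
    have hSne : ∀ y : E, {r : ℝ | (j : ℝ≥0∞) ≤ μ (ball y r)}.Nonempty := by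
      intro y
      have hmono : Monotone fun k : ℕ => ball y (k : ℝ) := fun a b hab =>
        ball_subset_ball (by exact_mod_cast hab)
      have h1 : μ (⋃ k : ℕ, ball y (k : ℝ)) = ⨆ k : ℕ, μ (ball y (k : ℝ)) :=
        hmono.directed_le.measure_iUnion
      rw [iUnion_ball_nat, hμuniv] at h1
      have h2 : (j : ℝ≥0∞) < ⨆ k : ℕ, μ (ball y (k : ℝ)) := by
        rw [← h1]; exact ENNReal.natCast_lt_top j
      obtain ⟨k, hk⟩ := lt_iSup_iff.mp h2
      exact ⟨k, hk.le⟩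
    -- P2 : above the critical radius, mass at least j
    have hjle : ∀ (y : E) (r : ℝ), ρ y < r → (j : ℝ≥0∞) ≤ μ (ball y r) := by
      intro y r hr
      obtain ⟨s, hs, hsr⟩ := (csInf_lt_iff (hbdd y) (hSne y)).mp hr
      exact le_trans hs (measure_mono (ball_subset_ball hsr.le))
    -- P1 : below the critical radius, mass less than j
    have hltj : ∀ (y : E) (r : ℝ), r < ρ y → μ (ball y r) < (j : ℝ≥0∞) := by
      intro y r hr
      by_contra h
      push_neg at h
      exact absurd (csInf_le (hbdd y) h) (not_le.mpr hr)
    -- no point concentrates mass j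
    have hnoconc : ∀ y : E, ¬ ∀ ε : ℝ, 0 < ε → (j : ℝ≥0∞) ≤ μ (ball y ε) := by
      intro y hy
      have hfin1 : μ (cthickening 1 ({y} : Set E)) ≠ ⊤ := by
        rw [cthickening_singleton y zero_le_one]
        exact ne_of_lt (lt_of_le_of_lt
          (measure_mono (closedBall_subset_ball one_lt_two)) (hfin y 2))
      have ht : Filter.Tendsto (fun r => μ (cthickening r ({y} : Set E))) (nhds 0)
          (nhds (μ {y})) :=
        tendsto_measure_cthickening_of_isClosed ⟨1, one_pos, hfin1⟩ isClosed_singleton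
      have ht' : Filter.Tendsto (fun r => μ (cthickening r ({y} : Set E)))
          (nhdsWithin 0 (Set.Ioi 0)) (nhds (μ {y})) := ht.mono_left nhdsWithin_le_nhds
      have hge : (j : ℝ≥0∞) ≤ μ {y} := by
        refine ge_of_tendsto ht' ?_
        filter_upwards [self_mem_nhdsWithin] with r hr
        exact (hy r hr).trans (measure_mono
          (ball_subset_closedBall.trans (closedBall_subset_cthickening_singleton y r)))
      rw [hatom y] at hge
      have : (j : ℝ≥0∞) = 0 := le_antisymm hge zero_le
      exact hj.ne' (by exact_mod_cast this)
    have hρpos : ∀ y : E, 0 < ρ y := by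
      intro y
      by_contra h
      push_neg at h
      exact hnoconc y fun ε hε => hjle y ε (lt_of_le_of_lt h hε)
    -- local quasi-minimum of ρ
    have hlocmin : ∃ y : E, ∀ z : E, dist z y < 100 * ρ y → ρ y / 2 ≤ ρ z := by
      by_contra h
      push_neg at h
      choose f hf1 hf2 using h
      set u : ℕ → E := fun k => f^[k] 0 with hu
      have hustep : ∀ k, u (k + 1) = f (u k) := fun k => Function.iterate_succ_apply' f k 0
      have hρu : ∀ k, ρ (u k) ≤ ρ 0 / 2 ^ k := by
        intro k
        induction k with
        | zero => simp [hu]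
        | succ k ih =>
          rw [hustep k]
          have h1 := hf2 (u k)
          have h2 : ρ 0 / 2 ^ (k + 1) = (ρ 0 / 2 ^ k) / 2 := by
            rw [pow_succ]; ring
          rw [h2]
          linarith
      have hdist : ∀ k, dist (u k) (u (k + 1)) ≤ (100 * ρ 0) * (1 / 2 : ℝ) ^ k := by
        intro k
        rw [hustep k, dist_comm]
        have h1 := hf1 (u k)
        have h2 := hρu k
        have h3 : (100 * ρ 0) * (1 / 2 : ℝ) ^ k = 100 * (ρ 0 / 2 ^ k) := by
          rw [one_div, inv_pow]; ring
        rw [h3]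
        linarith
      have hc : CauchySeq u := cauchySeq_of_le_geometric (1 / 2) (100 * ρ 0)
        (by norm_num) hdist
      obtain ⟨y, hy⟩ := cauchySeq_tendsto_of_complete hc
      refine hnoconc y fun ε hε => ?_
      have hgeo : Filter.Tendsto (fun k : ℕ => ρ 0 / 2 ^ k) Filter.atTop (nhds 0) := by
        have h0 : Filter.Tendsto (fun k : ℕ => ((1 : ℝ) / 2) ^ k) Filter.atTop (nhds 0) :=
          tendsto_pow_atTop_nhds_zero_of_lt_one (by norm_num) (by norm_num)
        have := h0.const_mul (ρ 0)
        simpa [one_div, inv_pow, div_eq_mul_inv, mul_comm] using this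
      have h4 : ∀ᶠ k in Filter.atTop, ρ 0 / 2 ^ k < ε / 4 :=
        hgeo.eventually_lt_const (by linarith)
      have h5 : ∀ᶠ k in Filter.atTop, dist (u k) y < ε / 2 :=
        Filter.eventually_atTop.mpr (Metric.tendsto_atTop.mp hy (ε / 2) (by linarith))
      obtain ⟨k, hk1, hk2⟩ := (h4.and h5).exists
      have hρk : ρ (u k) < ε / 4 := lt_of_le_of_lt (hρu k) hk1
      have hsub : ball (u k) (2 * ρ (u k)) ⊆ ball y ε := by
        intro x hx
        rw [mem_ball] at hx ⊢
        calc dist x y ≤ dist x (u k) + dist (u k) y := dist_triangle x (u k) y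
        _ < 2 * ρ (u k) + ε / 2 := by linarith
        _ ≤ ε := by linarith
      exact le_trans (hjle (u k) _ (by linarith [hρpos (u k)])) (measure_mono hsub)
    obtain ⟨y, hymin⟩ := hlocmin
    set ρ₀ : ℝ := ρ y with hρ₀
    have hρ₀pos : 0 < ρ₀ := hρpos y
    -- pigeonhole helper
    have hpigeon : ∀ (a : E) (r : ℝ), 0 < r → (j : ℝ≥0∞) ≤ μ (closedBall a (20 * r)) →
        ∃ p ∈ F, (j : ℝ≥0∞) ≤ Cc * μ (ball (a + r • p) (r / 2)) := by
      intro a r hr hja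
      have hle : (j : ℝ≥0∞) ≤ ∑ p ∈ F, μ (ball (a + r • p) (r / 2)) :=
        hja.trans ((measure_mono (hcov a r hr)).trans (measure_biUnion_finset_le F _))
      have hFne : F.Nonempty := by
        rcases F.eq_empty_or_nonempty with hF | hF
        · exfalso
          rw [hF, Finset.sum_empty, nonpos_iff_eq_zero, Nat.cast_eq_zero] at hle
          exact hj.ne' hle
        · exact hF
      obtain ⟨p, hpF, hpmax⟩ := F.exists_max_image
        (fun p => μ (ball (a + r • p) (r / 2))) hFne
      refine ⟨p, hpF, hle.trans ?_⟩
      calc ∑ q ∈ F, μ (ball (a + r • q) (r / 2))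
          ≤ F.card • μ (ball (a + r • p) (r / 2)) :=
            Finset.sum_le_card_nsmul F _ _ fun q hq => hpmax q hq
        _ = Cc * μ (ball (a + r • p) (r / 2)) := by
            rw [nsmul_eq_mul, hCc]
    -- find concentrated center z near y
    have hj2ρ : (j : ℝ≥0∞) ≤ μ (closedBall y (20 * (ρ₀ / 5))) := by
      refine le_trans (hjle y (2 * ρ₀) (by linarith)) (measure_mono ?_)
      refine ball_subset_closedBall.trans (closedBall_subset_closedBall ?_)
      linarith
    obtain ⟨p₁, hp₁F, hz⟩ := hpigeon y (ρ₀ / 5) (by linarith) hj2ρ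
    set z : E := y + (ρ₀ / 5) • p₁ with hzdef
    have hdistzy : dist z y ≤ 4 * ρ₀ := by
      have : dist z y = ‖(ρ₀ / 5) • p₁‖ := by
        rw [hzdef, dist_eq_norm]; congr 1; abel
      rw [this, norm_smul, Real.norm_of_nonneg (by linarith : (0:ℝ) ≤ ρ₀ / 5)]
      have := hFmem p₁ hp₁F
      nlinarith [norm_nonneg p₁]
    have hρz_lb : ρ₀ / 2 ≤ ρ z := hymin z (by linarith)
    have hρz_ub : ρ z ≤ 7 * ρ₀ := by
      refine csInf_le (hbdd z) ?_
      rw [Set.mem_setOf_eq]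
      refine le_trans (hjle y (2 * ρ₀) (by linarith)) (measure_mono ?_)
      intro x hx
      rw [mem_ball] at hx ⊢
      calc dist x z ≤ dist x y + dist y z := dist_triangle x y z
      _ < 2 * ρ₀ + 4 * ρ₀ := by
          have := hdistzy
          rw [dist_comm] at this
          linarith
      _ ≤ 7 * ρ₀ := by linarith
    set s : ℝ := ρ z with hsdef
    have hspos : 0 < s := lt_of_lt_of_le (by linarith) hρz_lb
    refine ⟨z, s, hspos, hjle z (2 * s) (by linarith), ?_⟩
    -- upper bound: μ(ball z (2s)) ≤ Cc * j
    have hupper : μ (ball z (2 * s)) ≤ Cc * (j : ℝ≥0∞) := by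
      have hr₂pos : (0:ℝ) < 7 / 10 * ρ₀ := by linarith
      have hsub : ball z (2 * s) ⊆ closedBall z (20 * (7 / 10 * ρ₀)) := by
        refine ball_subset_closedBall.trans (closedBall_subset_closedBall ?_)
        linarith
      calc μ (ball z (2 * s))
          ≤ ∑ p ∈ F, μ (ball (z + (7 / 10 * ρ₀) • p) ((7 / 10 * ρ₀) / 2)) :=
            (measure_mono (hsub.trans (hcov z _ hr₂pos))).trans
              (measure_biUnion_finset_le F _)
        _ ≤ ∑ _p ∈ F, (j : ℝ≥0∞) := by
            refine Finset.sum_le_sum fun p hp => ?_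
            set w : E := z + (7 / 10 * ρ₀) • p with hwdef
            have hdistwz : dist w z ≤ 14 * ρ₀ := by
              have : dist w z = ‖(7 / 10 * ρ₀) • p‖ := by
                rw [hwdef, dist_eq_norm]; congr 1; abel
              rw [this, norm_smul, Real.norm_of_nonneg hr₂pos.le]
              have := hFmem p hp
              nlinarith [norm_nonneg p]
            have hdistwy : dist w y < 100 * ρ₀ := by
              calc dist w y ≤ dist w z + dist z y := dist_triangle w z y
              _ ≤ 14 * ρ₀ + 4 * ρ₀ := by linarith
              _ < 100 * ρ₀ := by linarith
            have hρw : ρ₀ / 2 ≤ ρ w := hymin w hdistwy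
            exact (hltj w _ (by linarith)).le
        _ = Cc * (j : ℝ≥0∞) := by
            rw [Finset.sum_const, nsmul_eq_mul, hCc]
    -- lower bound: j ≤ Cc * μ(ball z s)
    have hlower : (j : ℝ≥0∞) ≤ Cc * μ (ball z s) := by
      refine hz.trans (mul_le_mul_right (measure_mono (ball_subset_ball ?_)) _)
      linarith
    calc μ (ball z (2 * s)) ≤ Cc * (j : ℝ≥0∞) := hupper
      _ ≤ Cc * (Cc * μ (ball z s)) := mul_le_mul_right hlower _
      _ = (Cc * Cc) * μ (ball z s) := by rw [mul_assoc]
      _ ≤ ((Cc + 2) * (Cc + 2)) * μ (ball z s) := by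
          refine mul_le_mul_left (mul_le_mul' ?_ ?_) _ <;> exact le_add_right le_rfl
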